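/- Key inequality in the convergence proof: if φ(fₙ) ↓ φ* > φ(f̂) with φ* = φ(f̂) + δ, D_φ(fₙ;fₙ) = 0, A2′ holds, and θₙ satisfies D_φ(f_{θₙ};fₙ) ≤ ½ inf_θ D_φ(f_θ;fₙ), then D_φ(f_{θₙ} − fₙ; fₙ) ≤ −δ/2. -/

import Mathlib

open Filter Topology Set MeasureTheory

/-- Key inequality in the convergence proof: if `φ(f) ≥ φ* = φ(f̂) + δ` with
`δ > 0`, `D(f;f) = 0`, A2′ holds for the representation of the minimizer `f̂`,
the subgradient inequality `D(f̂ − f; f) ≤ φ(f̂) − φ(f)` holds, and the vertex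
`θₙ` satisfies `D(f_{θₙ};f) ≤ ½ D(f_θ;f)` for all `θ`, then
`D(f_{θₙ} − f; f) ≤ −δ/2`. -/
theorem support_reduction_stmt14
    {E : Type*} [NormedAddCommGroup E] [NormedSpace ℝ E]
    {Θ : Type*} [MeasurableSpace Θ] (fθ : Θ → E)
    (φ : E → ℝ) (D : E → E → ℝ)
    (fhat : E) (μhat : Measure Θ) [IsProbabilityMeasure μhat]
    (hμint : Integrable (fun t => fθ t) μhat)
    (hrep : fhat = ∫ t, fθ t ∂μhat)
    (f : E) (δ : ℝ) (hδ : 0 < δ)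
    (hstar : φ fhat + δ ≤ φ f)
    (hzero : D f f = 0)
    -- A2′ applied to f̂ at f
    (hA2 : D fhat f = ∫ t, D (fθ t) f ∂μhat)
    (hDint : Integrable (fun t => D (fθ t) f) μhat)
    -- subgradient inequality (from convexity, A1)
    (hsub : D (fhat - f) f ≤ φ fhat - φ f)
    -- linearity of the derivative (from A2′)
    (hlin : ∀ h : E, D (h - f) f = D h f - D f f)
    (θn : Θ)
    (hθn : ∀ t : Θ, D (fθ θn) f ≤ (1/2) * D (fθ t) f) :
    D (fθ θn - f) f ≤ -δ / 2 := by
  have hfh : D fhat f ≤ -δ := by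
    have := hlin fhat
    nlinarith [hsub]
  have hkey : D (fθ θn) f ≤ (1/2) * D fhat f := by
    have h1 : ∫ t, D (fθ θn) f ∂μhat ≤ ∫ t, (1/2) * D (fθ t) f ∂μhat :=
      integral_mono (integrable_const _) (hDint.const_mul _) hθn
    rw [integral_const, probReal_univ, one_smul,
      integral_const_mul] at h1
    rw [hA2]; exact h1
  have := hlin (fθ θn)
  rw [this, hzero]
  linarith
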